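/- Define x(ξ,η) = (η + ξ)/(η − ξ), y(ξ,η) = (η·ξ − 1)/(η − ξ), and μ(ξ,η) = log((η·ξ + 1)/(η − ξ)) on the domain {(ξ,η) ∈ ℝ² : η > ξ and η·ξ + 1 > 0}. Then x, y, μ satisfy the twistor compatibility system at every point of this domain, i.e. x_{ξη} = μ_ξ·x_η + μ_η·x_ξ and y_{ξη} = μ_ξ·y_η + μ_η·y_ξ. -/

import Mathlib

section aux

/-- ∂/∂t of (s+t)/(s-t). -/
lemma aux_hx_t (s t : ℝ) (h : s - t ≠ 0) :
    HasDerivAt (fun u : ℝ => (s + u) / (s - u)) (2 * s / (s - t) ^ 2) t := by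
  have h1 : HasDerivAt (fun u : ℝ => s + u) 1 t := (hasDerivAt_id t).const_add s
  have h2 : HasDerivAt (fun u : ℝ => s - u) (-1) t := (hasDerivAt_id t).const_sub s
  have := h1.div h2 h
  refine this.congr_deriv ?_
  ring

/-- ∂/∂t of (s*t-1)/(s-t). -/
lemma aux_hy_t (s t : ℝ) (h : s - t ≠ 0) :
    HasDerivAt (fun u : ℝ => (s * u - 1) / (s - u)) ((s ^ 2 - 1) / (s - t) ^ 2) t := by
  have h1 : HasDerivAt (fun u : ℝ => s * u - 1) s t := by
    simpa using ((hasDerivAt_id t).const_mul s).sub_const 1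
  have h2 : HasDerivAt (fun u : ℝ => s - u) (-1) t := (hasDerivAt_id t).const_sub s
  have := h1.div h2 h
  refine this.congr_deriv ?_
  ring

/-- ∂/∂v of (v+t)/(v-t). -/
lemma aux_hx_s (t v : ℝ) (h : v - t ≠ 0) :
    HasDerivAt (fun u : ℝ => (u + t) / (u - t)) (-2 * t / (v - t) ^ 2) v := by
  have h1 : HasDerivAt (fun u : ℝ => u + t) 1 v := (hasDerivAt_id v).add_const t
  have h2 : HasDerivAt (fun u : ℝ => u - t) 1 v := (hasDerivAt_id v).sub_const t
  have := h1.div h2 h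
  refine this.congr_deriv ?_
  ring

/-- ∂/∂v of (v*t-1)/(v-t). -/
lemma aux_hy_s (t v : ℝ) (h : v - t ≠ 0) :
    HasDerivAt (fun u : ℝ => (u * t - 1) / (u - t)) ((1 - t ^ 2) / (v - t) ^ 2) v := by
  have h1 : HasDerivAt (fun u : ℝ => u * t - 1) t v := by
    simpa using ((hasDerivAt_id v).mul_const t).sub_const 1
  have h2 : HasDerivAt (fun u : ℝ => u - t) 1 v := (hasDerivAt_id v).sub_const t
  have := h1.div h2 h
  refine this.congr_deriv ?_
  ring

/-- ∂/∂t of log((s*t+1)/(s-t)). -/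
lemma aux_hμ_t (s t : ℝ) (h1 : 0 < s - t) (h2 : 0 < s * t + 1) :
    HasDerivAt (fun u : ℝ => Real.log ((s * u + 1) / (s - u)))
      ((s ^ 2 + 1) / ((s - t) * (s * t + 1))) t := by
  have hn1 : HasDerivAt (fun u : ℝ => s * u + 1) s t := by
    simpa using ((hasDerivAt_id t).const_mul s).add_const 1
  have hn2 : HasDerivAt (fun u : ℝ => s - u) (-1) t := (hasDerivAt_id t).const_sub s
  have hinner := hn1.div hn2 h1.ne'
  have hpos : (s * t + 1) / (s - t) ≠ 0 := by positivity
  have := hinner.log hpos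
  refine this.congr_deriv ?_
  simp only [Pi.div_apply]
  field_simp
  ring

/-- ∂/∂v of log((v*t+1)/(v-t)). -/
lemma aux_hμ_s (t v : ℝ) (h1 : 0 < v - t) (h2 : 0 < v * t + 1) :
    HasDerivAt (fun u : ℝ => Real.log ((u * t + 1) / (u - t)))
      (-(t ^ 2 + 1) / ((v - t) * (v * t + 1))) v := by
  have hn1 : HasDerivAt (fun u : ℝ => u * t + 1) t v := by
    simpa using ((hasDerivAt_id v).mul_const t).add_const 1
  have hn2 : HasDerivAt (fun u : ℝ => u - t) 1 v := (hasDerivAt_id v).sub_const t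
  have hinner := hn1.div hn2 h1.ne'
  have hpos : (v * t + 1) / (v - t) ≠ 0 := by positivity
  have := hinner.log hpos
  refine this.congr_deriv ?_
  simp only [Pi.div_apply]
  field_simp
  ring

/-- outer derivative for x. -/
lemma aux_outer_x (c v : ℝ) (h : v - c ≠ 0) :
    HasDerivAt (fun s : ℝ => 2 * s / (s - c) ^ 2) ((-2 * v - 2 * c) / (v - c) ^ 3) v := by
  have h1 : HasDerivAt (fun s : ℝ => 2 * s) 2 v := by
    simpa using (hasDerivAt_id v).const_mul 2
  have h2 : HasDerivAt (fun s : ℝ => (s - c) ^ 2) (2 * (v - c)) v := by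
    have := ((hasDerivAt_id v).sub_const c).pow 2
    refine this.congr_deriv ?_
    simp
  have := h1.div h2 (pow_ne_zero 2 h)
  refine this.congr_deriv ?_
  field_simp
  ring

/-- outer derivative for y. -/
lemma aux_outer_y (c v : ℝ) (h : v - c ≠ 0) :
    HasDerivAt (fun s : ℝ => (s ^ 2 - 1) / (s - c) ^ 2) ((2 - 2 * v * c) / (v - c) ^ 3) v := by
  have h1 : HasDerivAt (fun s : ℝ => s ^ 2 - 1) (2 * v) v := by
    have := ((hasDerivAt_id v).pow 2).sub_const 1
    simpa using this
  have h2 : HasDerivAt (fun s : ℝ => (s - c) ^ 2) (2 * (v - c)) v := by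
    have := ((hasDerivAt_id v).sub_const c).pow 2
    refine this.congr_deriv ?_
    simp
  have := h1.div h2 (pow_ne_zero 2 h)
  refine this.congr_deriv ?_
  field_simp
  ring

end aux

/-- the elliptic data `x = (η + ξ)/(η − ξ)`, `y = (ηξ − 1)/(η − ξ)`,
`μ = log ((ηξ + 1)/(η − ξ))` satisfies the twistor compatibility system on
`{η > ξ, ηξ + 1 > 0}`. -/
theorem stmt_5 (x y μ : ℝ → ℝ → ℝ)
    (hx : x = fun ξ η => (η + ξ) / (η - ξ))
    (hy : y = fun ξ η => (η * ξ - 1) / (η - ξ))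
    (hμ : μ = fun ξ η => Real.log ((η * ξ + 1) / (η - ξ))) :
    ∀ ξ η : ℝ, ξ < η → 0 < η * ξ + 1 →
      (deriv (fun s => deriv (fun t => x t s) ξ) η
          = deriv (fun t => μ t η) ξ * deriv (fun s => x ξ s) η
            + deriv (fun s => μ ξ s) η * deriv (fun t => x t η) ξ) ∧
      (deriv (fun s => deriv (fun t => y t s) ξ) η
          = deriv (fun t => μ t η) ξ * deriv (fun s => y ξ s) η
            + deriv (fun s => μ ξ s) η * deriv (fun t => y t η) ξ) := by
  subst hx hy hμ
  intro ξ η hlt hpos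
  have ha : (0:ℝ) < η - ξ := sub_pos.mpr hlt
  have ha' : η - ξ ≠ 0 := ha.ne'
  -- first derivatives at the point
  have hxξ : deriv (fun t => (η + t) / (η - t)) ξ = 2 * η / (η - ξ) ^ 2 :=
    (aux_hx_t η ξ ha').deriv
  have hyξ : deriv (fun t => (η * t - 1) / (η - t)) ξ = (η ^ 2 - 1) / (η - ξ) ^ 2 :=
    (aux_hy_t η ξ ha').deriv
  have hxη : deriv (fun s => (s + ξ) / (s - ξ)) η = -2 * ξ / (η - ξ) ^ 2 :=
    (aux_hx_s ξ η ha').deriv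
  have hyη : deriv (fun s => (s * ξ - 1) / (s - ξ)) η = (1 - ξ ^ 2) / (η - ξ) ^ 2 :=
    (aux_hy_s ξ η ha').deriv
  have hμξ : deriv (fun t => Real.log ((η * t + 1) / (η - t))) ξ
      = (η ^ 2 + 1) / ((η - ξ) * (η * ξ + 1)) := (aux_hμ_t η ξ ha hpos).deriv
  have hμη : deriv (fun s => Real.log ((s * ξ + 1) / (s - ξ))) η
      = -(ξ ^ 2 + 1) / ((η - ξ) * (η * ξ + 1)) := by
    have := (aux_hμ_s ξ η ha (by linarith [hpos])).deriv
    simpa [mul_comm] using this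
  -- nested derivatives: eventual equality near η
  have hne : ∀ᶠ s in nhds η, s ≠ ξ := eventually_ne_nhds (by linarith)
  have hevx : (fun s => deriv (fun t => (s + t) / (s - t)) ξ)
      =ᶠ[nhds η] fun s => 2 * s / (s - ξ) ^ 2 := by
    filter_upwards [hne] with s hs
    exact (aux_hx_t s ξ (sub_ne_zero.mpr hs)).deriv
  have hevy : (fun s => deriv (fun t => (s * t - 1) / (s - t)) ξ)
      =ᶠ[nhds η] fun s => (s ^ 2 - 1) / (s - ξ) ^ 2 := by
    filter_upwards [hne] with s hs
    exact (aux_hy_t s ξ (sub_ne_zero.mpr hs)).deriv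
  have hXX : deriv (fun s => deriv (fun t => (s + t) / (s - t)) ξ) η
      = (-2 * η - 2 * ξ) / (η - ξ) ^ 3 := by
    rw [hevx.deriv_eq]
    exact (aux_outer_x ξ η ha').deriv
  have hYY : deriv (fun s => deriv (fun t => (s * t - 1) / (s - t)) ξ) η
      = (2 - 2 * η * ξ) / (η - ξ) ^ 3 := by
    rw [hevy.deriv_eq]
    exact (aux_outer_y ξ η ha').deriv
  refine ⟨?_, ?_⟩
  · rw [hXX, hxξ, hxη, hμξ, hμη]
    have hb : η * ξ + 1 ≠ 0 := hpos.ne'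
    field_simp
    ring
  · rw [hYY, hyξ, hyη, hμξ, hμη]
    have hb : η * ξ + 1 ≠ 0 := hpos.ne'
    field_simp
    ring
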